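/- Let π: L(p) → L(q) be an admissible homomorphism. Then π maps the dualizing element ω = (t−2)c − Σ_{i=1}^t x_i of L(p) to the dualizing element ω' = (s−2)d − Σ_{j=1}^s z_j of L(q). -/

import Mathlib

open scoped BigOperators

def stringRelators {ι : Type} [DecidableEq ι] (p : ι → ℕ) : Set (ι → ℤ) :=
  { v | ∃ i j : ι, v = (p i : ℤ) • Pi.single i 1 - (p j : ℤ) • Pi.single j 1 }

abbrev StringGroup {ι : Type} [DecidableEq ι] (p : ι → ℕ) : Type :=
  (ι → ℤ) ⧸ AddSubgroup.closure (stringRelators p)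

def xgen {ι : Type} [DecidableEq ι] (p : ι → ℕ) (i : ι) : StringGroup p :=
  QuotientAddGroup.mk (Pi.single i 1)

def canon {ι : Type} [DecidableEq ι] (p : ι → ℕ) (i : ι) : StringGroup p :=
  (p i : ℤ) • xgen p i

namespace SG

variable {n : ℕ} (p : Fin (n+1) → ℕ)

lemma canon_def (i : Fin (n+1)) : canon p i = (p i : ℤ) • xgen p i := rfl

/-- the quotient map as a hom -/
def mkh : (Fin (n+1) → ℤ) →+ StringGroup p := QuotientAddGroup.mk' _

lemma mkh_single (i : Fin (n+1)) : mkh p (Pi.single i 1) = xgen p i := rfl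

/-- chi on representatives -/
def chiAux : (Fin (n+1) → ℤ) →+ ℚ where
  toFun v := ∑ i, (v i : ℚ) / p i
  map_zero' := by simp
  map_add' v w := by
    simp only [Pi.add_apply, Int.cast_add, add_div, Finset.sum_add_distrib]

lemma chiAux_single (i : Fin (n+1)) (c : ℤ) :
    chiAux p (c • Pi.single i 1) = (c : ℚ) / p i := by
  simp only [chiAux, AddMonoidHom.coe_mk, ZeroHom.coe_mk]
  rw [Finset.sum_eq_single i]
  · simp
  · intro b _ hb
    simp [Pi.single_apply, hb]
  · simp

lemma chiAux_relator (hp : ∀ i, 2 ≤ p i) :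
    AddSubgroup.closure (stringRelators p) ≤ (chiAux p).ker := by
  rw [AddSubgroup.closure_le]
  rintro v ⟨i, j, rfl⟩
  have hi : (p i : ℚ) ≠ 0 := by have := hp i; positivity
  have hj : (p j : ℚ) ≠ 0 := by have := hp j; positivity
  simp only [SetLike.mem_coe, AddMonoidHom.mem_ker, map_sub, chiAux_single]
  rw [Int.cast_natCast, Int.cast_natCast, div_self hi, div_self hj, sub_self]

variable (hp : ∀ i, 2 ≤ p i)

/-- chi on the quotient -/
def chi : StringGroup p →+ ℚ := QuotientAddGroup.lift _ (chiAux p) (chiAux_relator p hp)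

lemma chi_mk (v : Fin (n+1) → ℤ) : chi p hp (mkh p v) = chiAux p v := rfl

lemma chi_xgen (i : Fin (n+1)) : chi p hp (xgen p i) = 1 / p i := by
  rw [← mkh_single, chi_mk, ← one_smul ℤ (Pi.single i 1), chiAux_single]
  norm_num

lemma chi_canon (i : Fin (n+1)) : chi p hp (canon p i) = 1 := by
  have hi : (p i : ℚ) ≠ 0 := by have := hp i; positivity
  rw [canon_def, map_zsmul, chi_xgen p hp]
  rw [zsmul_eq_mul]; push_cast
  field_simp

/-- reduction mod p j on representatives -/
def redA (j : Fin (n+1)) : (Fin (n+1) → ℤ) →+ ZMod (p j) :=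
  (Int.castAddHom (ZMod (p j))).comp (Pi.evalAddMonoidHom (fun _ => ℤ) j)

lemma redA_apply (j : Fin (n+1)) (v : Fin (n+1) → ℤ) : redA p j v = (v j : ZMod (p j)) := rfl

lemma redA_relator (j : Fin (n+1)) :
    AddSubgroup.closure (stringRelators p) ≤ (redA p j).ker := by
  rw [AddSubgroup.closure_le]
  rintro v ⟨a, b, rfl⟩
  simp only [SetLike.mem_coe, AddMonoidHom.mem_ker, redA_apply, Pi.sub_apply,
    Pi.smul_apply, Pi.single_apply, smul_eq_mul]
  rcases eq_or_ne j a with rfl | ha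
  · rcases eq_or_ne j b with rfl | hb
    · simp [ZMod.natCast_self]
    · simp [hb, ZMod.natCast_self]
  · rcases eq_or_ne j b with rfl | hb
    · simp [ha, ZMod.natCast_self]
    · simp [ha, hb]

/-- reduction mod p j on the quotient -/
def red (j : Fin (n+1)) : StringGroup p →+ ZMod (p j) :=
  QuotientAddGroup.lift _ (redA p j) (redA_relator p j)

lemma red_mk (j : Fin (n+1)) (v : Fin (n+1) → ℤ) : red p j (mkh p v) = (v j : ZMod (p j)) := rfl

lemma red_xgen (j k : Fin (n+1)) : red p j (xgen p k) = if k = j then 1 else 0 := by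
  rw [← mkh_single, red_mk, Pi.single_apply]
  rcases eq_or_ne k j with rfl | h
  · simp
  · rw [if_neg (Ne.symm h), if_neg h]; simp

lemma red_canon (j i : Fin (n+1)) : red p j (canon p i) = 0 := by
  rw [canon_def, map_zsmul, red_xgen]
  rcases eq_or_ne i j with rfl | h
  · simp [ZMod.natCast_self]
  · simp [h]

end SG

namespace SG2
open SG

variable {n : ℕ} (p : Fin (n+1) → ℕ) (hp : ∀ i, 2 ≤ p i)

include hp in
lemma pne (j : Fin (n+1)) : (p j : ℚ) ≠ 0 := by have := hp j; positivity

lemma canon_eq (j : Fin (n+1)) : (p j : ℤ) • xgen p j = canon p 0 := by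
  have h : ((p j : ℤ) • xgen p j) - canon p 0 = mkh p ((p j : ℤ) • Pi.single j 1 - (p 0 : ℤ) • Pi.single 0 1) := by
    rw [map_sub, map_zsmul, map_zsmul, mkh_single, mkh_single, canon_def]
  have hmem : ((p j : ℤ) • Pi.single j 1 - (p 0 : ℤ) • Pi.single 0 1) ∈
      AddSubgroup.closure (stringRelators p) :=
    AddSubgroup.subset_closure ⟨j, 0, rfl⟩
  have h0 : mkh p ((p j : ℤ) • Pi.single j 1 - (p 0 : ℤ) • Pi.single 0 1) = 0 :=
    (QuotientAddGroup.eq_zero_iff _).2 hmem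
  have := h.trans h0
  linear_combination (norm := abel) this

lemma sum_zsmul' {A : Type} [AddCommGroup A] (a : A) {β : Type} (s : Finset β) (f : β → ℤ) :
    (∑ i ∈ s, f i) • a = ∑ i ∈ s, f i • a :=
  map_sum (zmultiplesHom A a) f s

lemma nf_mk (v : Fin (n+1) → ℤ) :
    mkh p v = ∑ j, (v j % p j) • xgen p j + (∑ j, v j / p j) • canon p 0 := by
  rw [sum_zsmul', ← Finset.sum_add_distrib]
  have : ∀ j : Fin (n+1), (v j % p j) • xgen p j + (v j / p j) • canon p 0 = v j • xgen p j := by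
    intro j
    rw [← canon_eq p j, smul_smul, ← add_zsmul, Int.emod_add_ediv_mul (v j) (p j)]
  rw [Finset.sum_congr rfl (fun j _ => this j)]
  have : ∀ j : Fin (n+1), v j • xgen p j = mkh p (Pi.single j (v j)) := by
    intro j
    rw [← mkh_single, ← map_zsmul]
    congr 1
    rw [← Pi.single_smul, smul_eq_mul, mul_one]
  rw [Finset.sum_congr rfl (fun j _ => this j), ← map_sum, Finset.univ_sum_single]

/-- the l-coefficients of the normal form -/
def lco (j : Fin (n+1)) (g : StringGroup p) : ℤ := ((red p j g).val : ℤ)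

lemma lco_nonneg (j : Fin (n+1)) (g : StringGroup p) : 0 ≤ lco p j g := Int.natCast_nonneg _

include hp in
lemma lco_lt (j : Fin (n+1)) (g : StringGroup p) : lco p j g < p j := by
  haveI : NeZero (p j) := ⟨by have := hp j; omega⟩
  show ((red p j g).val : ℤ) < (p j : ℤ)
  exact_mod_cast ZMod.val_lt (red p j g)

include hp in
lemma lco_mk (j : Fin (n+1)) (v : Fin (n+1) → ℤ) : lco p j (mkh p v) = v j % p j := by
  haveI : NeZero (p j) := ⟨by have := hp j; omega⟩
  rw [lco, red_mk, ZMod.val_intCast]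

/-- the fractional part -/
def fr (g : StringGroup p) : ℚ := ∑ j, (lco p j g : ℚ) / p j

lemma fr_nonneg (g : StringGroup p) : 0 ≤ fr p g :=
  Finset.sum_nonneg fun j _ => div_nonneg (by exact_mod_cast lco_nonneg p j g) (Nat.cast_nonneg _)

include hp in
lemma fr_lt (g : StringGroup p) : fr p g < n + 1 := by
  have : ∀ j : Fin (n+1), (lco p j g : ℚ) / p j < 1 := by
    intro j
    rw [div_lt_one (by have := hp j; positivity)]
    exact_mod_cast lco_lt p hp j g
  calc fr p g < ∑ _j : Fin (n+1), (1:ℚ) := Finset.sum_lt_sum_of_nonempty ⟨0, Finset.mem_univ 0⟩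
        (fun j _ => this j)
    _ = n + 1 := by simp

/-- the m-coefficient of the normal form -/
def mco (g : StringGroup p) : ℤ := ⌊chi p hp g - fr p g⌋

lemma mco_mk (v : Fin (n+1) → ℤ) : mco p hp (mkh p v) = ∑ j, v j / p j := by
  have key : chi p hp (mkh p v) - fr p (mkh p v) = ((∑ j, v j / p j : ℤ) : ℚ) := by
    rw [chi_mk]
    show (∑ j, (v j : ℚ) / p j) - fr p (mkh p v) = _
    rw [fr, ← Finset.sum_sub_distrib]
    push_cast
    refine Finset.sum_congr rfl fun j _ => ?_
    rw [lco_mk p hp, div_sub_div_same]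
    have h0 := Int.mul_ediv_add_emod (v j) (p j)
    have h1 : (p j : ℚ) * ((v j / p j : ℤ) : ℚ) + ((v j % p j : ℤ) : ℚ) = (v j : ℚ) := by
      exact_mod_cast h0
    have hv : (v j : ℚ) - (v j % p j : ℤ) = (p j : ℚ) * ((v j / p j : ℤ) : ℚ) := by
      linarith
    rw [hv, mul_div_cancel_left₀ _ (pne p hp j)]
  rw [mco, key, Int.floor_intCast]

lemma mco_spec (g : StringGroup p) : (mco p hp g : ℚ) = chi p hp g - fr p g := by
  obtain ⟨v, rfl⟩ := QuotientAddGroup.mk'_surjective _ g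
  show (mco p hp (mkh p v) : ℚ) = chi p hp (mkh p v) - fr p (mkh p v)
  rw [mco_mk p hp, chi_mk]
  show _ = (∑ j, (v j : ℚ) / p j) - fr p (mkh p v)
  rw [fr, ← Finset.sum_sub_distrib]
  push_cast
  refine Finset.sum_congr rfl fun j _ => ?_
  rw [lco_mk p hp, div_sub_div_same]
  have h0 := Int.mul_ediv_add_emod (v j) (p j)
  have h1 : (p j : ℚ) * ((v j / p j : ℤ) : ℚ) + ((v j % p j : ℤ) : ℚ) = (v j : ℚ) := by
    exact_mod_cast h0
  have hv : (v j : ℚ) - ((v j % p j : ℤ) : ℚ) = (p j : ℚ) * ((v j / p j : ℤ) : ℚ) := by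
    linarith
  rw [hv, mul_div_cancel_left₀ _ (pne p hp j)]

lemma nf (g : StringGroup p) :
    g = ∑ j, lco p j g • xgen p j + mco p hp g • canon p 0 := by
  obtain ⟨v, rfl⟩ := QuotientAddGroup.mk'_surjective _ g
  show mkh p v = ∑ j, lco p j (mkh p v) • xgen p j + mco p hp (mkh p v) • canon p 0
  rw [mco_mk p hp]
  conv_lhs => rw [nf_mk p v]
  congr 1
  refine Finset.sum_congr rfl fun j _ => ?_
  rw [lco_mk p hp]

include hp in
lemma nf_unique (l : Fin (n+1) → ℤ) (m : ℤ) (hl : ∀ j, 0 ≤ l j ∧ l j < p j)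
    {g : StringGroup p} (hg : g = ∑ k, l k • xgen p k + m • canon p 0) :
    (∀ j, lco p j g = l j) ∧ mco p hp g = m := by
  have hred : ∀ j, red p j g = ((l j : ℤ) : ZMod (p j)) := by
    intro j
    rw [hg, map_add, map_sum, map_zsmul, red_canon, smul_zero, add_zero]
    simp only [map_zsmul]
    have h1 : ∀ k : Fin (n+1), l k • red p j (xgen p k) =
        if k = j then ((l k : ℤ) : ZMod (p j)) else 0 := by
      intro k
      rw [red_xgen]
      split <;> simp [zsmul_eq_mul]
    rw [Finset.sum_congr rfl (fun k _ => h1 k), Finset.sum_ite_eq']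
    simp
  have hlco : ∀ j, lco p j g = l j := by
    intro j
    haveI : NeZero (p j) := ⟨by have := hp j; omega⟩
    rw [lco, hred j, ZMod.val_intCast, Int.emod_eq_of_lt (hl j).1 (hl j).2]
  refine ⟨hlco, ?_⟩
  have hchi : chi p hp g = ∑ j, (l j : ℚ) / p j + m := by
    rw [hg, map_add, map_sum, map_zsmul, chi_canon]
    simp only [map_zsmul, chi_xgen, zsmul_eq_mul, mul_one]
    push_cast
    congr 1
    exact Finset.sum_congr rfl fun j _ => by ring
  have hfr : fr p g = ∑ j, (l j : ℚ) / p j := by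
    rw [fr]
    exact Finset.sum_congr rfl fun j _ => by rw [hlco j]
  have : (mco p hp g : ℚ) = (m : ℚ) := by
    rw [mco_spec, hchi, hfr]; ring
  exact_mod_cast this

include hp in
lemma lco_red (j : Fin (n+1)) (g : StringGroup p) :
    red p j g = ((lco p j g : ℤ) : ZMod (p j)) := by
  haveI : NeZero (p j) := ⟨by have := hp j; omega⟩
  rw [lco, Int.cast_natCast, ZMod.natCast_val, ZMod.cast_id]

include hp in
lemma lco_add (a b : StringGroup p) (j : Fin (n+1)) :
    lco p j (a + b) = lco p j a + lco p j b
      - (p j : ℤ) * (if (p j : ℤ) ≤ lco p j a + lco p j b then 1 else 0) := by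
  haveI : NeZero (p j) := ⟨by have := hp j; omega⟩
  set α := lco p j a + lco p j b
    - (p j : ℤ) * (if (p j : ℤ) ≤ lco p j a + lco p j b then 1 else 0) with hα
  have hb1 := lco_nonneg p j a; have hb2 := lco_nonneg p j b
  have hb3 := lco_lt p hp j a; have hb4 := lco_lt p hp j b
  have hbound : 0 ≤ α ∧ α < p j := by
    rw [hα]; split_ifs with h <;> constructor <;> omega
  have hred : red p j (a + b) = ((α : ℤ) : ZMod (p j)) := by
    rw [map_add, lco_red p hp j a, lco_red p hp j b, hα]
    split_ifs with h
    · push_cast [ZMod.natCast_self]; ring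
    · push_cast; ring
  rw [lco, hred, ZMod.val_intCast, Int.emod_eq_of_lt hbound.1 hbound.2]

/-- number of carries -/
def car (a b : StringGroup p) : ℤ :=
  ∑ j, (if (p j : ℤ) ≤ lco p j a + lco p j b then 1 else 0)

lemma car_nonneg (a b : StringGroup p) : 0 ≤ car p a b :=
  Finset.sum_nonneg fun j _ => by split <;> norm_num

lemma car_le (a b : StringGroup p) : car p a b ≤ n + 1 := by
  calc car p a b ≤ ∑ _j : Fin (n+1), (1:ℤ) :=
        Finset.sum_le_sum fun j _ => by split <;> norm_num
    _ = n + 1 := by simp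

include hp in
lemma mco_add (a b : StringGroup p) :
    mco p hp (a + b) = mco p hp a + mco p hp b + car p a b := by
  have key : (mco p hp (a + b) : ℚ) = (mco p hp a : ℚ) + mco p hp b + car p a b := by
    rw [mco_spec, mco_spec, mco_spec, map_add]
    have hfr : fr p (a + b) = fr p a + fr p b - (car p a b : ℚ) := by
      rw [fr, fr, fr, car, ← Finset.sum_add_distrib]
      push_cast
      rw [← Finset.sum_sub_distrib]
      refine Finset.sum_congr rfl fun j _ => ?_
      rw [lco_add p hp a b j]
      split_ifs with h
      · push_cast
        rw [mul_one, sub_div, add_div, div_self (pne p hp j)]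
      · push_cast
        rw [mul_zero, sub_zero, add_div, sub_zero]
    rw [hfr]; ring
  exact_mod_cast key

include hp in
lemma lco_add_zc (g : StringGroup p) (m : ℤ) (j : Fin (n+1)) :
    lco p j (g + m • canon p 0) = lco p j g := by
  rw [lco, lco, map_add, map_zsmul, red_canon, smul_zero, add_zero]

include hp in
lemma mco_add_zc (g : StringGroup p) (m : ℤ) :
    mco p hp (g + m • canon p 0) = mco p hp g + m := by
  have key : (mco p hp (g + m • canon p 0) : ℚ) = (mco p hp g : ℚ) + m := by
    rw [mco_spec, mco_spec, map_add, map_zsmul, chi_canon]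
    have hfr : fr p (g + m • canon p 0) = fr p g := by
      rw [fr, fr]
      exact Finset.sum_congr rfl fun j _ => by rw [lco_add_zc p hp]
    rw [hfr, zsmul_eq_mul, mul_one]
    ring
  exact_mod_cast key

include hp in
lemma lco_zero (j : Fin (n+1)) : lco p j (0 : StringGroup p) = 0 := by
  rw [lco, map_zero]; simp

include hp in
lemma mco_zero : mco p hp (0 : StringGroup p) = 0 := by
  have key : (mco p hp (0 : StringGroup p) : ℚ) = 0 := by
    rw [mco_spec, map_zero, fr]
    have : ∀ j : Fin (n+1), (lco p j (0 : StringGroup p) : ℚ) / p j = 0 := by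
      intro j; rw [lco_zero p hp]; simp
    rw [Finset.sum_congr rfl fun j _ => this j]
    simp
  exact_mod_cast key

/-- the dualizing element -/
def omg : StringGroup p := (((n : ℕ) + 1 : ℤ) - 2) • canon p 0 - ∑ i, xgen p i

lemma omg_nf : omg p = ∑ j, ((p j : ℤ) - 1) • xgen p j + (-2) • canon p 0 := by
  have h1 : ∀ j : Fin (n+1), ((p j : ℤ) - 1) • xgen p j = canon p 0 - xgen p j := by
    intro j
    rw [sub_zsmul, one_zsmul, canon_eq]
    abel
  rw [Finset.sum_congr rfl (fun j _ => h1 j), Finset.sum_sub_distrib, Finset.sum_const,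
    Finset.card_univ, Fintype.card_fin, omg]
  have h2 : ((n : ℕ) + 1 : ℤ) - 2 = ((n : ℕ) + 1 : ℤ) + (-2) := by ring
  rw [h2, add_zsmul]
  have h3 : (((n : ℕ) + 1 : ℤ)) • canon p 0 = (n + 1) • canon p 0 := by
    rw [← natCast_zsmul]
    norm_num
  rw [h3]
  abel

include hp in
include hp in
lemma omg_hl : ∀ j, 0 ≤ (p j : ℤ) - 1 ∧ (p j : ℤ) - 1 < p j :=
  fun j => by have := hp j; omega

include hp in
lemma omg_lco (j : Fin (n+1)) : lco p j (omg p) = p j - 1 :=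
  (nf_unique p hp (fun j => (p j : ℤ) - 1) (-2) (omg_hl p hp) (omg_nf p)).1 j

include hp in
lemma omg_mco : mco p hp (omg p) = -2 :=
  (nf_unique p hp (fun j => (p j : ℤ) - 1) (-2) (omg_hl p hp) (omg_nf p)).2

include hp in
lemma dual (g : StringGroup p) :
    (∀ j, lco p j (omg p - g) = (p j : ℤ) - 1 - lco p j g) ∧
      mco p hp (omg p - g) = -2 - mco p hp g := by
  have hg := nf p hp g
  have hid : omg p - g = ∑ k, ((p k : ℤ) - 1 - lco p k g) • xgen p k
      + (-2 - mco p hp g) • canon p 0 := by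
    conv_lhs => rw [omg_nf, hg]
    have h1 : ∀ k : Fin (n+1), ((p k : ℤ) - 1 - lco p k g) • xgen p k =
        ((p k : ℤ) - 1) • xgen p k - lco p k g • xgen p k := by
      intro k; rw [sub_zsmul]; abel
    rw [Finset.sum_congr rfl (fun k _ => h1 k), Finset.sum_sub_distrib, sub_zsmul]
    abel
  have hl : ∀ j, 0 ≤ (p j : ℤ) - 1 - lco p j g ∧ (p j : ℤ) - 1 - lco p j g < p j :=
    fun j => by have h1 := lco_nonneg p j g; have h2 := lco_lt p hp j g; omega
  exact nf_unique p hp _ _ hl hid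

end SG2

def IsEffective {κ : Type} [DecidableEq κ] (q : κ → ℕ) (H : AddSubgroup (StringGroup q)) : Prop :=
  ∀ j : κ, ∀ ρ : StringGroup q →+ ZMod (q j),
    (∀ k, ρ (xgen q k) = if k = j then 1 else 0) →
    ∀ y : ZMod (q j), ∃ x ∈ H, ρ x = y

def Admissible {ι κ : Type} [DecidableEq ι] [DecidableEq κ]
    (p : ι → ℕ) (q : κ → ℕ)
    (multp : StringGroup p → ℕ) (multq : StringGroup q → ℕ)
    (π : StringGroup p →+ StringGroup q) : Prop :=
  IsEffective q π.range ∧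
  ∀ z ∈ Set.range π, (∑ᶠ x ∈ π ⁻¹' {z}, multp x) = multq z

namespace SG2

variable {n : ℕ} (p : Fin (n+1) → ℕ) (hp : ∀ i, 2 ≤ p i)

include hp in
lemma mult_eq (mult : StringGroup p → ℕ)
    (hmult : ∀ (l : Fin (n+1) → ℤ) (m : ℤ), (∀ i, 0 ≤ l i ∧ l i < (p i : ℤ)) →
      mult (∑ i, l i • xgen p i + m • canon p 0) = (m + 1).toNat) (g : StringGroup p) :
    mult g = (mco p hp g + 1).toNat := by
  conv_lhs => rw [nf p hp g]
  exact hmult _ _ (fun j => ⟨lco_nonneg p j g, lco_lt p hp j g⟩)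

include hp in
lemma nf_injective {a b : StringGroup p}
    (h1 : ∀ j, lco p j a = lco p j b) (h2 : mco p hp a = mco p hp b) : a = b := by
  rw [nf p hp a, nf p hp b, h2]
  congr 1
  exact Finset.sum_congr rfl fun j _ => by rw [h1 j]

end SG2

set_option maxHeartbeats 1000000 in
open SG SG2 in
theorem stmt13 {t s : ℕ} (p : Fin (t+1) → ℕ) (q : Fin (s+1) → ℕ)
    (hp : ∀ i, 2 ≤ p i) (hq : ∀ j, 2 ≤ q j)
    (multp : StringGroup p → ℕ) (multq : StringGroup q → ℕ)
    (hmultp : ∀ (l : Fin (t+1) → ℤ) (m : ℤ), (∀ i, 0 ≤ l i ∧ l i < (p i : ℤ)) →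
      multp (∑ i, l i • xgen p i + m • canon p 0) = (m + 1).toNat)
    (hmultq : ∀ (l : Fin (s+1) → ℤ) (m : ℤ), (∀ j, 0 ≤ l j ∧ l j < (q j : ℤ)) →
      multq (∑ j, l j • xgen q j + m • canon q 0) = (m + 1).toNat)
    (π : StringGroup p →+ StringGroup q)
    (hadm : Admissible p q multp multq π) :
    π ((((t : ℕ) + 1 : ℤ) - 2) • canon p 0 - ∑ i, xgen p i) =
      (((s : ℕ) + 1 : ℤ) - 2) • canon q 0 - ∑ j, xgen q j := by
  have hmp : ∀ g, multp g = (mco p hp g + 1).toNat := mult_eq p hp multp hmultp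
  have hmq : ∀ g, multq g = (mco q hq g + 1).toNat := mult_eq q hq multq hmultq
  set K : Set (StringGroup p) := ⇑π ⁻¹' {0} with hKdef
  have hK0 : (0 : StringGroup p) ∈ K := by simp [hKdef]
  have hKneg : ∀ k ∈ K, -k ∈ K := by
    intro k hk
    simp only [hKdef, Set.mem_preimage, Set.mem_singleton_iff, map_neg] at *
    rw [hk, neg_zero]
  have hKsmul : ∀ k ∈ K, ∀ z : ℤ, z • k ∈ K := by
    intro k hk z
    simp only [hKdef, Set.mem_preimage, Set.mem_singleton_iff, map_zsmul] at *
    rw [hk, smul_zero]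
  -- fibers of π
  have hfiber : ∀ y : StringGroup p, ⇑π ⁻¹' {π y} = (fun k => y + k) '' K := by
    intro y
    ext x
    simp only [Set.mem_preimage, Set.mem_singleton_iff, Set.mem_image, hKdef]
    constructor
    · intro h
      exact ⟨x - y, by rw [map_sub, h, sub_self], by abel⟩
    · rintro ⟨k, hk, rfl⟩
      rw [map_add, hk, add_zero]
  have hsum2 : ∀ y : StringGroup p, (∑ᶠ k ∈ K, multp (y + k)) = multq (π y) := by
    intro y
    have h1 := hadm.2 (π y) ⟨y, rfl⟩
    rw [hfiber y, finsum_mem_image (fun a _ b _ h => by exact add_left_cancel h)] at h1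
    exact h1
  classical
  have hmq0 : multq 0 = 1 := by
    rw [hmq, mco_zero q hq]; rfl
  have h01 : (∑ᶠ k ∈ K, multp k) = 1 := by
    have := hsum2 0
    simp only [zero_add, map_zero] at this
    rw [this, hmq0]
  have hsfin : (K ∩ Function.support multp).Finite := by
    by_contra h
    rw [finsum_mem_eq_zero_of_infinite h] at h01
    exact one_ne_zero h01.symm
  have hmp0 : multp 0 = 1 := by rw [hmp, mco_zero p hp]; rfl
  have hK1 : ∀ k ∈ K, k ≠ 0 → multp k = 0 := by
    intro k hk hk0
    by_contra hm
    rw [finsum_mem_eq_sum multp hsfin] at h01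
    have hsub : {0, k} ⊆ hsfin.toFinset := by
      intro x hx
      rw [Set.Finite.mem_toFinset]
      rcases Finset.mem_insert.1 hx with rfl | hx
      · exact ⟨hK0, by simp [Function.mem_support, hmp0]⟩
      · rw [Finset.mem_singleton] at hx; subst hx
        exact ⟨hk, hm⟩
    have hle : ∑ x ∈ ({0, k} : Finset _), multp x ≤ ∑ x ∈ hsfin.toFinset, multp x :=
      Finset.sum_le_sum_of_subset hsub
    rw [Finset.sum_pair (Ne.symm hk0), h01, hmp0] at hle
    omega
  have hKmco : ∀ k ∈ K, k ≠ 0 → mco p hp k + 1 ≤ 0 := by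
    intro k hk hk0
    have := hK1 k hk hk0
    rw [hmp] at this
    omega
  -- chi vanishes on K
  have hchiK : ∀ k ∈ K, chi p hp k = 0 := by
    intro k hk
    have key : ∀ z : ℤ, (z : ℚ) * chi p hp k < (t : ℚ) + 1 := by
      intro z
      have hzk := hKsmul k hk z
      have hchi : chi p hp (z • k) = (z : ℚ) * chi p hp k := by
        rw [map_zsmul, zsmul_eq_mul]
      rcases eq_or_ne (z • k) 0 with h0 | h0
      · rw [h0, map_zero] at hchi
        rw [← hchi]; positivity
      · have h1 := hKmco _ hzk h0
        have h1' : mco p hp (z • k) ≤ -1 := by omega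
        have h2 : (mco p hp (z • k) : ℚ) ≤ -1 := by exact_mod_cast h1'
        have h3 := fr_lt p hp (z • k)
        have h4 := mco_spec p hp (z • k)
        rw [← hchi]
        have : chi p hp (z • k) = (mco p hp (z • k) : ℚ) + fr p (z • k) := by
          rw [h4]; ring
        rw [this]
        push_cast at h3 ⊢
        linarith
    by_contra hne
    rcases lt_or_gt_of_ne hne with hlt | hgt
    · obtain ⟨z, hz⟩ := exists_int_gt (((t : ℚ) + 1) / (-chi p hp k))
      have hz2 : (z : ℚ) * (-chi p hp k) > (t : ℚ) + 1 := by
        rw [gt_iff_lt, ← div_lt_iff₀ (by linarith)]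
        exact hz
      have := key (-z)
      push_cast at this
      nlinarith
    · obtain ⟨z, hz⟩ := exists_int_gt (((t : ℚ) + 1) / (chi p hp k))
      have hz2 : (z : ℚ) * chi p hp k > (t : ℚ) + 1 := by
        rw [gt_iff_lt, ← div_lt_iff₀ hgt]
        exact hz
      have := key z
      linarith
  -- mco bounds on K
  have hKbound : ∀ k ∈ K, -(t + 1 : ℤ) < mco p hp k ∧ mco p hp k ≤ 0 := by
    intro k hk
    have h1 := mco_spec p hp k
    rw [hchiK k hk, zero_sub] at h1
    have h2 := fr_nonneg p k
    have h3 := fr_lt p hp k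
    constructor
    · have : (-(t + 1 : ℤ) : ℚ) < (mco p hp k : ℚ) := by
        rw [h1]; push_cast; linarith
      exact_mod_cast this
    · have : (mco p hp k : ℚ) ≤ 0 := by rw [h1]; linarith
      exact_mod_cast this
  -- K is finite
  have hKfin : K.Finite := by
    set Φ : StringGroup p → (Fin (t+1) → ℤ) × ℤ :=
      fun g => (fun j => lco p j g, mco p hp g) with hΦ
    have hinj : Function.Injective Φ := by
      intro a b hab
      rw [hΦ, Prod.mk.injEq] at hab
      exact nf_injective p hp (fun j => congrFun hab.1 j) hab.2
    have hS : ((Set.univ.pi fun j => Set.Icc (0:ℤ) (p j)) ×ˢ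
        Set.Icc (-(t + 1 : ℤ)) 0).Finite :=
      Set.Finite.prod (Set.Finite.pi fun j => Set.finite_Icc _ _) (Set.finite_Icc _ _)
    refine Set.Finite.subset (hS.preimage hinj.injOn) ?_
    intro k hk
    simp only [Set.mem_preimage, Set.mem_prod, Set.mem_pi, Set.mem_univ, forall_true_left,
      Set.mem_Icc, hΦ]
    refine ⟨fun j => ⟨lco_nonneg p j k, le_of_lt (lco_lt p hp j k)⟩, ?_, (hKbound k hk).2⟩
    exact le_of_lt (hKbound k hk).1
  -- finite kernel as a Finset
  set KF : Finset (StringGroup p) := hKfin.toFinset with hKFdef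
  have hKFmem : ∀ x, x ∈ KF ↔ x ∈ K := fun x => Set.Finite.mem_toFinset hKfin
  have hKF0 : (0 : StringGroup p) ∈ KF := (hKFmem 0).2 hK0
  set n₀ : ℤ := (KF.card : ℤ) with hn₀def
  have hn₀ : 1 ≤ n₀ := by
    have : 0 < KF.card := Finset.card_pos.2 ⟨0, hKF0⟩
    omega
  have hsum3 : ∀ y : StringGroup p, ∑ k ∈ KF, multp (y + k) = multq (π y) := by
    intro y
    have h := finsum_mem_eq_finite_toFinset_sum (fun k => multp (y + k)) hKfin
    rw [← h, hsum2]
  set v : StringGroup q := π (canon p 0) with hvdef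
  have hπzc : ∀ (y : StringGroup p) (z : ℤ), π (y + z • canon p 0) = π y + z • v := by
    intro y z; rw [map_add, map_zsmul]
  set E : StringGroup p → ℤ := fun y => ∑ k ∈ KF, (mco p hp (y + k) + 1) with hEdef
  have hL1 : ∀ (y : StringGroup p) (z : ℤ), (∀ k ∈ KF, 0 ≤ mco p hp (y + k) + z) →
      (multq (π y + z • v) : ℤ) = E y + z * n₀ := by
    intro y z hz
    rw [← hπzc, ← hsum3]
    push_cast
    have hterm : ∀ k ∈ KF, (multp (y + z • canon p 0 + k) : ℤ) = (mco p hp (y + k) + 1) + z := by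
      intro k hk
      rw [hmp]
      have harr : y + z • canon p 0 + k = (y + k) + z • canon p 0 := by abel
      rw [harr, mco_add_zc p hp, Int.toNat_of_nonneg (by have := hz k hk; omega)]
      ring
    rw [Finset.sum_congr rfl hterm, Finset.sum_add_distrib, Finset.sum_const, hEdef,
      nsmul_eq_mul, hn₀def]
    ring
  -- choice of large shift
  set N : StringGroup p → ℤ := fun y => 1 + |E y| + ∑ k ∈ KF, |mco p hp (y + k)| with hNdef
  have hN1 : ∀ y, 1 ≤ N y := by
    intro y
    have h1 : 0 ≤ |E y| := abs_nonneg _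
    have h2 : 0 ≤ ∑ k ∈ KF, |mco p hp (y + k)| :=
      Finset.sum_nonneg fun k _ => abs_nonneg _
    simp only [hNdef]; omega
  have hNk : ∀ y, ∀ z : ℤ, N y ≤ z → ∀ k ∈ KF, 0 ≤ mco p hp (y + k) + z := by
    intro y z hzN k hk
    have h1 : |mco p hp (y + k)| ≤ ∑ k ∈ KF, |mco p hp (y + k)| :=
      Finset.single_le_sum (f := fun k => |mco p hp (y + k)|) (fun k _ => abs_nonneg _) hk
    have h2 : 0 ≤ |E y| := abs_nonneg _
    have h3 := abs_nonneg (mco p hp (y + k))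
    have h4 := le_abs_self (mco p hp (y + k))
    have h5 := neg_abs_le (mco p hp (y + k))
    simp only [hNdef] at hzN
    omega
  have hNE : ∀ y, ∀ z : ℤ, N y ≤ z → 1 ≤ E y + z * n₀ := by
    intro y z hzN
    have h2 : 0 ≤ ∑ k ∈ KF, |mco p hp (y + k)| :=
      Finset.sum_nonneg fun k _ => abs_nonneg _
    have h4 := le_abs_self (E y)
    have h5 := neg_abs_le (E y)
    have hz1 : 1 ≤ z := le_trans (hN1 y) hzN
    have h6 : z ≤ z * n₀ := le_mul_of_one_le_right (by omega) hn₀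
    simp only [hNdef] at hzN
    omega
  have hkey : ∀ (y : StringGroup p) (z : ℤ), N y ≤ z →
      mco q hq (π y + z • v) = E y + z * n₀ - 1 := by
    intro y z hz
    have h := hL1 y z (hNk y z hz)
    rw [hmq] at h
    have h2 := hNE y z hz
    omega
  have hmcoQ : ∀ (w : StringGroup q) (z : ℤ),
      (mco q hq (w + z • v) : ℚ) = chi q hq w + z * chi q hq v - fr q (w + z • v) := by
    intro w z
    rw [mco_spec, map_add, map_zsmul, zsmul_eq_mul]
  -- periodicity
  set Q : ℕ := ∏ j, q j with hQdef
  have hQ1 : 1 ≤ Q := Finset.one_le_prod' fun j _ => by have := hq j; omega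
  have hper1 : ∀ (g : StringGroup q) (z : ℤ) (j : Fin (s+1)),
      lco q j (g + (z + Q) • v) = lco q j (g + z • v) := by
    intro g z j
    have hred : red q j (g + (z + Q) • v) = red q j (g + z • v) := by
      rw [map_add, map_add, map_zsmul, map_zsmul, add_zsmul]
      have hQ0 : ((Q : ℤ) : ZMod (q j)) = 0 := by
        rw [Int.cast_natCast]
        rw [ZMod.natCast_eq_zero_iff]
        exact Finset.dvd_prod_of_mem q (Finset.mem_univ j)
      rw [zsmul_eq_mul, zsmul_eq_mul, hQ0, zero_mul, add_zero]
    rw [lco, lco, hred]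
  have hfrper : ∀ (g : StringGroup q) (z : ℤ),
      fr q (g + (z + Q) • v) = fr q (g + z • v) := by
    intro g z
    rw [fr, fr]
    exact Finset.sum_congr rfl fun j _ => by rw [hper1 g z j]
  have hfrQ : ∀ (g : StringGroup q) (a : ℕ), fr q (g + ((a * Q : ℕ) : ℤ) • v) = fr q g := by
    intro g a
    induction a with
    | zero => simp
    | succ a ih =>
      have harr : (((a+1) * Q : ℕ) : ℤ) = ((a * Q : ℕ) : ℤ) + Q := by push_cast; ring
      rw [harr, hfrper g ((a * Q : ℕ) : ℤ), ih]
  -- chi v = n₀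
  have hchiv : chi q hq v = n₀ := by
    have c1 := hkey 0 (N 0) le_rfl
    have c2 := hkey 0 (N 0 + Q) (by have := hQ1; omega)
    have d1 := hmcoQ (π 0) (N 0)
    have d2 := hmcoQ (π 0) (N 0 + Q)
    rw [c1] at d1
    rw [c2] at d2
    rw [map_zero] at d1 d2
    have hfr12 : fr q (0 + (N 0 + Q) • v) = fr q (0 + N 0 • v) := hfrper 0 (N 0)
    rw [hfr12] at d2
    have hQne : (Q : ℚ) ≠ 0 := by positivity
    have : (Q : ℚ) * chi q hq v = (Q : ℚ) * n₀ := by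
      push_cast at d1 d2 ⊢
      linarith
    exact mul_left_cancel₀ hQne this
  -- the central formula : E y = mco (π y) + 1
  have hL3 : ∀ y : StringGroup p, E y = mco q hq (π y) + 1 := by
    intro y
    set a : ℕ := (N y).toNat + 1 with hadef
    have haQ : N y ≤ ((a * Q : ℕ) : ℤ) := by
      have h1 : a ≤ a * Q := Nat.le_mul_of_pos_right a (by omega)
      have h2 : N y ≤ (a : ℤ) := by rw [hadef]; push_cast; omega
      calc N y ≤ (a : ℤ) := h2
        _ ≤ ((a * Q : ℕ) : ℤ) := by exact_mod_cast h1
    have c1 := hkey y ((a * Q : ℕ) : ℤ) haQ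
    have d1 := hmcoQ (π y) ((a * Q : ℕ) : ℤ)
    rw [c1, hchiv] at d1
    rw [hfrQ (π y) a] at d1
    have hmspec := mco_spec q hq (π y)
    have : (E y : ℚ) = (mco q hq (π y) : ℚ) + 1 := by
      push_cast at d1 ⊢
      rw [hmspec]
      linarith
    exact_mod_cast this
  -- structure of v
  have hE0 : E 0 = 1 := by
    rw [hL3 0, map_zero, mco_zero q hq]
    omega
  have hfrconst : ∀ z : ℤ, N 0 ≤ z → fr q ((0 : StringGroup q) + z • v) = 0 := by
    intro z hz
    have c := hkey 0 z hz
    rw [map_zero] at c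
    have d := hmcoQ 0 z
    rw [map_zero, c, hE0, hchiv] at d
    push_cast at d
    linarith
  have hfrv : fr q v = 0 := by
    set a : ℕ := (N 0).toNat + 1 with hadef
    have ha2 : N 0 ≤ (a : ℤ) := by simp only [hadef]; push_cast; omega
    have haQ : N 0 ≤ 1 + ((a * Q : ℕ) : ℤ) := by
      have h1 : a ≤ a * Q := Nat.le_mul_of_pos_right a (by omega)
      have h2 : (a : ℤ) ≤ ((a * Q : ℕ) : ℤ) := by exact_mod_cast h1
      omega
    have e1 : fr q ((0 : StringGroup q) + (1 + ((a * Q : ℕ) : ℤ)) • v) = 0 := hfrconst _ haQ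
    have e2 : (0 : StringGroup q) + (1 + ((a * Q : ℕ) : ℤ)) • v
        = ((0 : StringGroup q) + (1:ℤ) • v) + ((a * Q : ℕ) : ℤ) • v := by
      rw [add_zsmul]; abel
    rw [e2, hfrQ ((0 : StringGroup q) + (1:ℤ) • v) a] at e1
    rw [zero_add, one_zsmul] at e1
    exact e1
  have hlcov : ∀ j, lco q j v = 0 := by
    intro j
    by_contra hne
    have hj : 0 < lco q j v := lt_of_le_of_ne (lco_nonneg q j v) (Ne.symm hne)
    have hterm : (0:ℚ) < (lco q j v : ℚ) / q j := by
      have := hq j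
      apply div_pos
      · exact_mod_cast hj
      · positivity
    have hle : (lco q j v : ℚ) / q j ≤ fr q v := by
      rw [fr]
      exact Finset.single_le_sum (f := fun i => (lco q i v : ℚ) / q i)
        (fun i _ => div_nonneg (by exact_mod_cast lco_nonneg q i v) (Nat.cast_nonneg _))
        (Finset.mem_univ j)
    rw [hfrv] at hle
    linarith
  have hmcov : mco q hq v = n₀ := by
    have h := mco_spec q hq v
    rw [hfrv, hchiv, sub_zero] at h
    exact_mod_cast h
  have hvnf : v = n₀ • canon q 0 := by
    have h := nf q hq v
    have hzero : ∑ j, lco q j v • xgen q j = 0 :=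
      Finset.sum_eq_zero fun j _ => by rw [hlcov j, zero_zsmul]
    rw [hzero, hmcov, zero_add] at h
    exact h
  have hshift : ∀ (g : StringGroup q) (z : ℤ), mco q hq (g + z • v) = mco q hq g + z * n₀ := by
    intro g z
    rw [hvnf, ← mul_zsmul, mco_add_zc q hq]
  -- duality sum identity
  have hD2 : ∀ y : StringGroup p, (multq (π y) : ℤ) - (multq (π (omg p) - π y) : ℤ) = E y := by
    intro y
    have h1 : π (omg p) - π y = π (omg p - y) := by rw [map_sub]
    have h2 : (multq (π (omg p - y)) : ℤ) = ∑ k ∈ KF, (multp (omg p - y + k) : ℤ) := by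
      exact_mod_cast (hsum3 (omg p - y)).symm
    have h3 : ∑ k ∈ KF, (multp (omg p - y + k) : ℤ)
        = ∑ k ∈ KF, (multp (omg p - (y + k)) : ℤ) := by
      refine Finset.sum_equiv (Equiv.neg (StringGroup p)) ?_ ?_
      · intro k
        simp only [Equiv.neg_apply, hKFmem]
        exact ⟨fun h => hKneg _ h, fun h => by have := hKneg _ h; simpa using this⟩
      · intro k _
        simp only [Equiv.neg_apply]
        congr 2
        abel
    have h5 : (multq (π y) : ℤ) = ∑ k ∈ KF, (multp (y + k) : ℤ) := by
      exact_mod_cast (hsum3 y).symm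
    have h4 : ∀ k, (multp (y + k) : ℤ) - (multp (omg p - (y + k)) : ℤ)
        = mco p hp (y + k) + 1 := by
      intro k
      rw [hmp, hmp, (dual p hp (y + k)).2]
      have harr : -2 - mco p hp (y + k) + 1 = -(mco p hp (y + k) + 1) := by ring
      rw [harr, Int.toNat_sub_toNat_neg]
    rw [h1, h2, h3, h5, ← Finset.sum_sub_distrib]
    simp only [hEdef]
    exact Finset.sum_congr rfl fun k _ => h4 k
  have hMeq : ∀ y : StringGroup p, multq (π (omg p) - π y) = multq (omg q - π y) := by
    intro y
    have h1 := hD2 y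
    rw [hL3 y] at h1
    have h2 : (multq (π y) : ℤ) - (multq (omg q - π y) : ℤ) = mco q hq (π y) + 1 := by
      rw [hmq, hmq, (dual q hq (π y)).2]
      have harr : -2 - mco q hq (π y) + 1 = -(mco q hq (π y) + 1) := by ring
      rw [harr, Int.toNat_sub_toNat_neg]
    omega
  have hmcoeq : ∀ y : StringGroup p, mco q hq (π (omg p) - π y) = mco q hq (omg q - π y) := by
    intro y
    set A : StringGroup q := π (omg p) - π y with hAdef
    set B : StringGroup q := omg q - π y with hBdef
    set z : ℤ := 1 + |mco q hq A| + |mco q hq B| with hzdef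
    have h1 := hMeq (y - z • canon p 0)
    have h' : π (y - z • canon p 0) = π y - z • v := by rw [map_sub, map_zsmul]
    have harr1 : π (omg p) - π (y - z • canon p 0) = A + z • v := by
      rw [h', hAdef]; abel
    have harr2 : omg q - π (y - z • canon p 0) = B + z • v := by
      rw [h', hBdef]; abel
    rw [harr1, harr2, hmq, hmq, hshift, hshift] at h1
    have e2 := le_abs_self (mco q hq A)
    have e3 := neg_abs_le (mco q hq A)
    have e4 := le_abs_self (mco q hq B)
    have e5 := neg_abs_le (mco q hq B)
    have ha1 := abs_nonneg (mco q hq A)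
    have ha2 := abs_nonneg (mco q hq B)
    have hz0 : 0 ≤ z := by rw [hzdef]; omega
    obtain ⟨zn, hzn⟩ : ∃ zn, z * n₀ = zn := ⟨_, rfl⟩
    rw [hzn] at h1
    have e1 : z ≤ zn := by rw [← hzn]; exact le_mul_of_one_le_right hz0 hn₀
    have hzeq : z = 1 + |mco q hq A| + |mco q hq B| := hzdef
    omega
  -- carry analysis
  set w : StringGroup q := π (omg p) with hwdef
  set δ : StringGroup q := w - omg q with hδdef
  have harr3 : ∀ y : StringGroup p, w - π y = (omg q - π y) + δ := by
    intro y; rw [hδdef]; abel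
  have hcar : ∀ y : StringGroup p, car q (omg q - π y) δ = - mco q hq δ := by
    intro y
    have h1 := hmcoeq y
    rw [harr3 y, mco_add q hq] at h1
    omega
  have hcar0 : car q (omg q) δ = - mco q hq δ := by
    have h := hcar 0
    rw [map_zero, sub_zero] at h
    exact h
  have hlcoδ : ∀ j, lco q j δ = 0 := by
    intro j
    by_contra hne
    have hδpos : 0 < lco q j δ := lt_of_le_of_ne (lco_nonneg q j δ) (Ne.symm hne)
    obtain ⟨x, hxr, hx⟩ := hadm.1 j (red q j) (red_xgen q j) (red q j (omg q))
    obtain ⟨y₀, rfl⟩ := hxr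
    have hlx : lco q j (omg q - π y₀) = 0 := by
      have hred0 : red q j (omg q - π y₀) = 0 := by rw [map_sub, hx, sub_self]
      rw [lco, hred0]
      simp
    have hc1 : car q (omg q - π y₀) δ = car q (omg q) δ := by rw [hcar y₀, hcar0]
    have hlt : car q (omg q - π y₀) δ < car q (omg q) δ := by
      rw [car, car]
      apply Finset.sum_lt_sum
      · intro i _
        rw [omg_lco q hq i]
        have hb1 := lco_lt q hq i (omg q - π y₀)
        have hb2 := lco_nonneg q i (omg q - π y₀)
        have hb3 := lco_nonneg q i δ
        split_ifs <;> omega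
      · refine ⟨j, Finset.mem_univ j, ?_⟩
        rw [hlx, omg_lco q hq j]
        have hδlt := lco_lt q hq j δ
        split_ifs <;> omega
    omega
  have hmcoδ : mco q hq δ = 0 := by
    have hcz : car q (omg q) δ = 0 := by
      rw [car]
      apply Finset.sum_eq_zero
      intro i _
      rw [omg_lco q hq i, hlcoδ i]
      have := hq i
      split_ifs with h1
      · exfalso; omega
      · rfl
    omega
  have hδ0 : δ = 0 := by
    refine nf_injective q hq (fun j => ?_) ?_
    · rw [hlcoδ j, lco_zero q hq]
    · rw [hmcoδ, mco_zero q hq]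
  have hfin : w = omg q := by
    rw [hδdef] at hδ0
    exact sub_eq_zero.1 hδ0
  exact hfin
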